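/- The set B₂ = ℝ \ A₂ is countable and scattered as a subset of H(A₂), yet the space H(A₂) is not σ-compact. (Hence the statement 'if ℝ \ A is countable and scattered in H(A) then H(A) is σ-compact' is false.) -/

import Mathlib

open Set TopologicalSpace Topology Filter

/-- The Hattori topology τ(A) on ℝ: generated by the Euclidean open sets together with
all sets [x, x+ε) with x ∈ ℝ \ A and ε > 0. -/
def hattori (A : Set ℝ) : TopologicalSpace ℝ :=
  TopologicalSpace.generateFrom
    ({s : Set ℝ | IsOpen s} ∪ {s : Set ℝ | ∃ x ∉ A, ∃ ε > 0, s = Set.Ico x (x + ε)})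

/-- A set `S` is scattered (w.r.t. a topology `t`) if every nonempty subset `T ⊆ S`
has a point isolated in `T` with the subspace topology. -/
def ScatteredIn {X : Type*} (t : TopologicalSpace X) (S : Set X) : Prop :=
  ∀ T ⊆ S, T.Nonempty → ∃ x ∈ T, ∃ U, IsOpen[t] U ∧ U ∩ T = {x}

/-- `B₂`: the set of right endpoints of the closed intervals appearing in the standard
middle-thirds construction of the Cantor set. -/
def B2 : Set ℝ :=
  {x | ∃ n : ℕ, ∃ c : ℕ → ℝ, (∀ i, c i = 0 ∨ c i = 2) ∧
    x = (∑ i ∈ Finset.range n, c i / 3 ^ (i + 1)) + 1 / 3 ^ n}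

/-- `A₂ = ℝ \ B₂`. -/
def A2 : Set ℝ := B2ᶜ


/-- all base-3 digits of n are even (0 or 2) -/
def Ev (n : ℕ) : Prop := ∀ k, n / 3 ^ k % 3 ≠ 1

lemma ev_zero : Ev 0 := by intro k; simp

lemma ev_div_pow {F : ℕ} (h : Ev F) (k : ℕ) : Ev (F / 3 ^ k) := by
  intro j
  rw [Nat.div_div_eq_div_mul, ← pow_add]
  exact h (k + j)

lemma ev_shift {E e : ℕ} (h : Ev E) (he : e = 0 ∨ e = 2) : Ev (3 * E + e) := by
  intro k
  cases k with
  | zero => simp [Nat.add_mul_mod_self_left]; omega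
  | succ k =>
    have : (3 * E + e) / 3 ^ (k + 1) = E / 3 ^ k := by
      rw [pow_succ', ← Nat.div_div_eq_div_mul]
      congr 1
      omega
    rw [this]; exact h k

lemma ev_div3 {E : ℕ} (h : Ev E) : Ev (E / 3) := by
  have := ev_div_pow h 1; simpa using this

lemma not_ev_succ : ∀ E : ℕ, Ev E → ¬ Ev (E + 1) := by
  intro E
  induction E using Nat.strong_induction_on with
  | _ E IH =>
    intro hE hE1
    have h0 := hE 0
    have h10 := hE1 0
    simp at h0 h10
    rcases (by omega : E % 3 = 0 ∨ E % 3 = 2) with h | h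
    · omega
    · have hdiv : (E + 1) / 3 = E / 3 + 1 := by omega
      have hEd : Ev (E / 3) := ev_div3 hE
      have hEd1 : Ev (E / 3 + 1) := by rw [← hdiv]; exact ev_div3 hE1
      rcases Nat.eq_zero_or_pos E with rfl | hpos
      · omega
      · exact IH (E / 3) (by omega) hEd hEd1

lemma nat_gap {E F m n : ℕ} (hE : Ev E) (hF : Ev F)
    (h : (E + 1) * 3 ^ m < (F + 1) * 3 ^ n) : (E + 2) * 3 ^ m ≤ (F + 1) * 3 ^ n := by
  rcases le_or_gt n m with hnm | hmn
  · obtain ⟨k, rfl⟩ := Nat.exists_eq_add_of_le hnm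
    have h3n : 0 < 3 ^ n := pow_pos (by norm_num) n
    have hk : 0 < 3 ^ k := pow_pos (by norm_num) k
    have hc1 : (E + 1) * 3 ^ k * 3 ^ n < (F + 1) * 3 ^ n := by
      rw [pow_add] at h; ring_nf at h ⊢; linarith
    have h1 : (E + 1) * 3 ^ k < F + 1 := Nat.lt_of_mul_lt_mul_right hc1
    by_contra hcon
    push_neg at hcon
    have hc2 : (F + 1) * 3 ^ n < (E + 2) * 3 ^ k * 3 ^ n := by
      rw [pow_add] at hcon; ring_nf at hcon ⊢; linarith
    have h2 : F + 1 < (E + 2) * 3 ^ k := Nat.lt_of_mul_lt_mul_right hc2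
    have hdiv : F / 3 ^ k = E + 1 := by
      have hle : E + 1 ≤ F / 3 ^ k := (Nat.le_div_iff_mul_le hk).mpr (by omega)
      have hlt : F / 3 ^ k < E + 2 := Nat.div_lt_of_lt_mul (by rw [mul_comm]; omega)
      omega
    exact not_ev_succ E hE (hdiv ▸ ev_div_pow hF k)
  · obtain ⟨k, rfl⟩ := Nat.exists_eq_add_of_le hmn.le
    have h3m : 0 < 3 ^ m := pow_pos (by norm_num) m
    have hc1 : (E + 1) * 3 ^ m < (F + 1) * 3 ^ k * 3 ^ m := by
      rw [pow_add] at h; ring_nf at h ⊢; linarith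
    have h1 : E + 1 < (F + 1) * 3 ^ k := Nat.lt_of_mul_lt_mul_right hc1
    have : (E + 2) * 3 ^ m ≤ (F + 1) * 3 ^ k * 3 ^ m :=
      Nat.mul_le_mul_right _ (by omega)
    calc (E + 2) * 3 ^ m ≤ (F + 1) * 3 ^ k * 3 ^ m := this
      _ = (F + 1) * 3 ^ (m + k) := by rw [pow_add]; ring

lemma hattori_le (A : Set ℝ) : hattori A ≤ (inferInstance : TopologicalSpace ℝ) := by
  intro s hs
  exact TopologicalSpace.GenerateOpen.basic s (Or.inl hs)

lemma hattori_isOpen_Ico {A : Set ℝ} {x : ℝ} (hx : x ∉ A) {ε : ℝ} (hε : 0 < ε) :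
    IsOpen[hattori A] (Set.Ico x (x + ε)) :=
  TopologicalSpace.GenerateOpen.basic _ (Or.inr ⟨x, hx, ε, hε, rfl⟩)

/-- every B2 sum has the form (E+1)/3^n with E even-digit -/
lemma b2_rep : ∀ (n : ℕ) (c : ℕ → ℝ), (∀ i, c i = 0 ∨ c i = 2) →
    ∃ E : ℕ, Ev E ∧
      (∑ i ∈ Finset.range n, c i / 3 ^ (i + 1)) + 1 / 3 ^ n = ((E : ℝ) + 1) / 3 ^ n := by
  intro n
  induction n with
  | zero => intro c hc; exact ⟨0, ev_zero, by norm_num⟩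
  | succ n IH =>
    intro c hc
    obtain ⟨E, hEv, hval⟩ := IH c hc
    have h3 : (3:ℝ) ^ n ≠ 0 := by positivity
    have hs : (∑ i ∈ Finset.range n, c i / 3 ^ (i + 1)) = ((E : ℝ) + 1) / 3 ^ n - 1 / 3 ^ n := by
      linarith [hval]
    rcases hc n with h | h
    · refine ⟨3 * E, (by simpa using ev_shift (e := 0) hEv (Or.inl rfl)) , ?_⟩
      rw [Finset.sum_range_succ, hs, h]
      push_cast
      field_simp
      ring
    · refine ⟨3 * E + 2, ev_shift hEv (Or.inr rfl), ?_⟩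
      rw [Finset.sum_range_succ, hs, h]
      push_cast
      field_simp
      ring

/-- points approaching a B2 point from the left are in B2 -/
lemma b2_left : ∀ (k n : ℕ) (c : ℕ → ℝ), (∀ i, c i = 0 ∨ c i = 2) →
    ((∑ i ∈ Finset.range n, c i / 3 ^ (i + 1)) + 1 / 3 ^ n) - 2 / 3 ^ (n + k + 1) ∈ B2 := by
  intro k
  induction k with
  | zero =>
    intro n c hc
    refine ⟨n + 1, fun i => if i < n then c i else 0, fun i => by by_cases h : i < n <;> simp [h, hc i], ?_⟩
    rw [Finset.sum_range_succ]
    have hsum : ∑ i ∈ Finset.range n, (if i < n then c i else 0) / 3 ^ (i + 1)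
        = ∑ i ∈ Finset.range n, c i / 3 ^ (i + 1) := by
      apply Finset.sum_congr rfl
      intro i hi
      simp [Finset.mem_range.mp hi]
    rw [hsum]
    simp only [lt_irrefl, if_neg, ↓reduceIte]
    have h3 : (3:ℝ) ^ n ≠ 0 := by positivity
    field_simp
    ring
  | succ k IH =>
    intro n c hc
    have hc' : ∀ i, (if i < n then c i else 2) = 0 ∨ (if i < n then c i else 2) = (2:ℝ) := by
      intro i; by_cases h : i < n <;> simp [h, hc i]
    have := IH (n + 1) (fun i => if i < n then c i else 2) hc'
    have hsum : ∑ i ∈ Finset.range (n+1), (if i < n then c i else 2) / 3 ^ (i + 1)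
        = (∑ i ∈ Finset.range n, c i / 3 ^ (i + 1)) + 2 / 3 ^ (n + 1) := by
      rw [Finset.sum_range_succ]
      congr 1
      · apply Finset.sum_congr rfl
        intro i hi
        simp [Finset.mem_range.mp hi]
      · simp
    rw [hsum] at this
    have heq : (∑ i ∈ Finset.range n, c i / 3 ^ (i + 1)) + 2 / 3 ^ (n + 1) + 1 / 3 ^ (n + 1)
        - 2 / 3 ^ (n + 1 + k + 1)
        = (∑ i ∈ Finset.range n, c i / 3 ^ (i + 1)) + 1 / 3 ^ n - 2 / 3 ^ (n + (k+1) + 1) := by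
      have e1 : n + 1 + k + 1 = n + (k + 1) + 1 := by ring
      rw [e1]
      have h3 : (3:ℝ) ^ (n+1) ≠ 0 := by positivity
      have : (2:ℝ) / 3 ^ (n + 1) + 1 / 3 ^ (n + 1) = 1 / 3 ^ n := by
        field_simp
        ring
      linarith
    rwa [heq] at this

lemma one_mem_B2 : (1:ℝ) ∈ B2 := ⟨0, fun _ => 0, fun _ => Or.inl rfl, by norm_num⟩

lemma real_gap {E F n m : ℕ} (hE : Ev E) (hF : Ev F)
    (h : ((E : ℝ) + 1) / 3 ^ n < ((F : ℝ) + 1) / 3 ^ m) :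
    ((E : ℝ) + 1) / 3 ^ n + 1 / 3 ^ n ≤ ((F : ℝ) + 1) / 3 ^ m := by
  have h3n : (0:ℝ) < 3 ^ n := by positivity
  have h3m : (0:ℝ) < 3 ^ m := by positivity
  rw [div_lt_div_iff₀ h3n h3m] at h
  have hnat : (E + 1) * 3 ^ m < (F + 1) * 3 ^ n := by
    have := h
    push_cast at this
    exact_mod_cast this
  have := nat_gap hE hF hnat
  have hr : ((E : ℝ) + 2) * 3 ^ m ≤ ((F : ℝ) + 1) * 3 ^ n := by exact_mod_cast this
  have : ((E : ℝ) + 2) / 3 ^ n ≤ ((F : ℝ) + 1) / 3 ^ m := by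
    rw [div_le_div_iff₀ h3n h3m]
    exact hr
  calc ((E : ℝ) + 1) / 3 ^ n + 1 / 3 ^ n = ((E : ℝ) + 2) / 3 ^ n := by ring
    _ ≤ _ := this

lemma b2_countable : B2.Countable := by
  have hsub : B2 ⊆ Set.range (fun p : ℕ × ℕ => ((p.2 : ℝ) + 1) / 3 ^ p.1) := by
    rintro x ⟨n, c, hc, rfl⟩
    obtain ⟨E, _, hval⟩ := b2_rep n c hc
    exact ⟨(n, E), hval.symm⟩
  exact (Set.countable_range _).mono hsub

lemma b2_scattered : ScatteredIn (hattori A2) B2 := by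
  rintro T hT ⟨x, hxT⟩
  obtain ⟨n, c, hc, hxeq⟩ := hT hxT
  obtain ⟨E, hEv, hrep⟩ := b2_rep n c hc
  have hx : x = ((E : ℝ) + 1) / 3 ^ n := hxeq.trans hrep
  have hxA2 : x ∉ A2 := by
    simp only [A2, mem_compl_iff, not_not]
    exact ⟨n, c, hc, hxeq⟩
  have hpos : (0:ℝ) < 1 / 3 ^ n := by positivity
  refine ⟨x, hxT, Set.Ico x (x + 1 / 3 ^ n), hattori_isOpen_Ico hxA2 hpos, ?_⟩
  apply Subset.antisymm
  · rintro y ⟨⟨hxy, hylt⟩, hyT⟩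
    obtain ⟨m, d, hd, hyeq⟩ := hT hyT
    obtain ⟨F, hFv, hFrep⟩ := b2_rep m d hd
    have hy : y = ((F : ℝ) + 1) / 3 ^ m := hyeq.trans hFrep
    rcases eq_or_lt_of_le hxy with heq | hlt2
    · simp [heq.symm]
    · exfalso
      have hlt3 : ((E : ℝ) + 1) / 3 ^ n < ((F : ℝ) + 1) / 3 ^ m := by
        rw [← hx, ← hy]; exact hlt2
      have := real_gap hEv hFv hlt3
      rw [← hx, ← hy] at this
      linarith
  · rintro y hy
    rw [mem_singleton_iff] at hy
    subst hy
    exact ⟨⟨le_refl y, by linarith⟩, hxT⟩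

lemma not_sigma : ¬ @SigmaCompactSpace ℝ (hattori A2) := by
  intro h
  obtain ⟨K, hKc, hKu⟩ := h.isSigmaCompact_univ
  -- each K i is compact, hence closed, for the euclidean topology
  have hcont : Continuous[hattori A2, inferInstance] id := continuous_id_iff_le.mpr (hattori_le A2)
  have hKstd : ∀ i, IsCompact (K i) := by
    intro i
    have := @IsCompact.image ℝ ℝ (hattori A2) _ (K i) id (hKc i) hcont
    simpa using this
  -- Baire category on D = closure B2
  haveI : CompleteSpace (closure B2) := isClosed_closure.completeSpace_coe
  haveI : Nonempty (closure B2) := ⟨⟨1, subset_closure one_mem_B2⟩⟩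
  have hclosed : ∀ i : ℕ, IsClosed ((Subtype.val : closure B2 → ℝ) ⁻¹' (K i)) :=
    fun i => ((hKstd i).isClosed).preimage continuous_subtype_val
  have hcover : ⋃ i, ((Subtype.val : closure B2 → ℝ) ⁻¹' (K i)) = univ := by
    rw [← preimage_iUnion, hKu]; simp
  obtain ⟨i, hi⟩ := nonempty_interior_of_iUnion_of_closed hclosed hcover
  obtain ⟨z, hz⟩ := hi
  rw [mem_interior_iff_mem_nhds, nhds_subtype_eq_comap, mem_comap] at hz
  obtain ⟨W, hW, hWsub⟩ := hz
  obtain ⟨ε, hε, hball⟩ := Metric.mem_nhds_iff.mp hW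
  -- all points of (closure B2) ∩ ball z ε lie in K i
  have hKD : ∀ w, w ∈ closure B2 → w ∈ Metric.ball (z:ℝ) ε → w ∈ K i := by
    intro w hw hwball
    exact hWsub (show (⟨w, hw⟩ : closure B2) ∈ Subtype.val ⁻¹' W from hball hwball)
  -- pick x ∈ B2 near z
  obtain ⟨x, hxB2, hxdist⟩ := Metric.mem_closure_iff.mp z.2 (ε/2) (by linarith)
  obtain ⟨n, c, hc, hxeq⟩ := hxB2
  obtain ⟨k0, hk0⟩ : ∃ k0 : ℕ, (4:ℝ)/ε < 3 ^ k0 := pow_unbounded_of_one_lt _ (by norm_num)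
  have hk0' : (2:ℝ)/3^k0 < ε/2 := by
    rw [div_lt_iff₀ (by positivity : (0:ℝ) < 3^k0)]
    rw [div_lt_iff₀ hε] at hk0
    nlinarith [pow_pos (show (0:ℝ) < 3 by norm_num) k0]
  set u : ℕ → ℝ := fun k => x - 2/3^(n + (k0 + k) + 1) with hu
  have hub : ∀ k, (2:ℝ)/3^(n + (k0 + k) + 1) ≤ 2/3^(k0+k) := by
    intro k
    apply div_le_div_of_nonneg_left (by norm_num) (by positivity)
    exact pow_le_pow_right₀ (by norm_num) (by omega)
  have humem : ∀ k, u k ∈ B2 := by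
    intro k
    have := b2_left (k0 + k) n c hc
    rw [← hxeq] at this
    exact this
  have hult : ∀ k, u k < x := fun k => by
    simp only [hu]
    have : (0:ℝ) < 2/3^(n + (k0 + k) + 1) := by positivity
    linarith
  have huball : ∀ k, u k ∈ Metric.ball (z:ℝ) ε := by
    intro k
    rw [Metric.mem_ball]
    have h1 : dist (u k) x = 2/3^(n + (k0 + k) + 1) := by
      rw [Real.dist_eq]
      have he : u k - x = -(2/3^(n + (k0 + k) + 1)) := by simp only [hu]; ring
      rw [he, abs_neg, abs_of_nonneg (by positivity)]
    have h2 : (2:ℝ)/3^(k0+k) ≤ 2/3^k0 := by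
      apply div_le_div_of_nonneg_left (by norm_num) (by positivity)
      exact pow_le_pow_right₀ (by norm_num) (by omega)
    calc dist (u k) (z:ℝ) ≤ dist (u k) x + dist x (z:ℝ) := dist_triangle _ _ _
      _ < ε/2 + ε/2 := by
          rw [h1, dist_comm]
          have := hub k
          linarith [hxdist]
      _ = ε := by ring
  have huK : ∀ k, u k ∈ K i := fun k => hKD _ (subset_closure (humem k)) (huball k)
  have hxK : x ∈ K i := hKD _ (subset_closure ⟨n, c, hc, hxeq⟩)
    (by rw [Metric.mem_ball, dist_comm]; linarith)
  -- u tends to x in the euclidean topology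
  have htend : Tendsto u atTop (𝓝 x) := by
    have h0 : Tendsto (fun k : ℕ => (2:ℝ)/3^(n + (k0 + k) + 1)) atTop (𝓝 0) := by
      apply squeeze_zero (fun t => by positivity) (fun t => ?_)
        (g := fun k : ℕ => 2 * (1/3:ℝ)^k)
      · have h1 : Tendsto (fun k : ℕ => ((1:ℝ)/3)^k) atTop (𝓝 0) :=
          tendsto_pow_atTop_nhds_zero_of_lt_one (by norm_num) (by norm_num)
        simpa using h1.const_mul 2
      · show (2:ℝ)/3^(n + (k0 + t) + 1) ≤ 2 * (1/3:ℝ)^t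
        have hp3 : ((1:ℝ)/3)^t = 1/3^t := by rw [div_pow]; norm_num
        rw [hp3]
        have h3 : (2:ℝ)/3^(n + (k0 + t) + 1) ≤ 2/3^t := by
          apply div_le_div_of_nonneg_left (by norm_num) (by positivity)
          exact pow_le_pow_right₀ (by norm_num) (by omega)
        calc (2:ℝ)/3^(n + (k0 + t) + 1) ≤ 2/3^t := h3
          _ = 2 * (1/3^t) := by ring
    have := Tendsto.sub (tendsto_const_nhds : Tendsto (fun _ : ℕ => x) atTop (𝓝 x)) h0
    simpa using this
  -- cluster point from hattori-compactness
  haveI : NeBot (map u atTop) := map_neBot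
  have hle : map u atTop ≤ 𝓟 (K i) := le_principal_iff.mpr
    (mem_map.mpr (univ_mem' huK))
  obtain ⟨p, hpK, hp⟩ := hKc i hle
  -- p is a std cluster point, so p = x
  have hple : @nhds ℝ (hattori A2) p ≤ @nhds ℝ _ p := nhds_mono (hattori_le A2)
  have hpstd : NeBot (𝓝 p ⊓ map u atTop) := NeBot.mono hp (inf_le_inf_right _ hple)
  have hpx : p = x := eq_of_nhds_neBot (NeBot.mono hpstd (inf_le_inf_left _ htend))
  subst hpx
  -- but [x, x+1) is a hattori-neighborhood of x missing all u k
  have hxA2 : p ∉ A2 := by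
    simp only [A2, mem_compl_iff, not_not]
    exact ⟨n, c, hc, hxeq⟩
  have hIco : IsOpen[hattori A2] (Set.Ico p (p + 1)) := hattori_isOpen_Ico hxA2 one_pos
  have hmem : Set.Ico p (p+1) ∈ @nhds ℝ (hattori A2) p :=
    @IsOpen.mem_nhds ℝ (hattori A2) _ _ hIco ⟨le_refl p, by linarith⟩
  have hcompl : (Set.Ico p (p+1))ᶜ ∈ map u atTop := by
    rw [mem_map]
    apply univ_mem'
    intro k
    simp only [mem_preimage, mem_compl_iff, Set.mem_Ico, not_and, not_lt]
    intro hge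
    exact absurd hge (not_le.mpr (hult k))
  have hempty : (∅ : Set ℝ) ∈ @nhds ℝ (hattori A2) p ⊓ map u atTop := by
    have := inter_mem (mem_inf_of_left hmem) (mem_inf_of_right hcompl)
    simpa using this
  exact hp.ne (empty_mem_iff_bot.mp hempty)

/-- B₂ = ℝ \ A₂ is countable and scattered in H(A₂), yet H(A₂) is not σ-compact. -/
theorem B2_countable_scattered_but_not_sigmaCompact :
    B2.Countable ∧ ScatteredIn (hattori A2) B2 ∧
    ¬ @SigmaCompactSpace ℝ (hattori A2) :=
  ⟨b2_countable, b2_scattered, not_sigma⟩
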